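/- For a nonnegative integer n and 0 ≤ r ≤ n, the derivative at x = 0 of the function x ↦ C(n+x, r) (the generalized binomial coefficient (n+x)(n+x-1)⋯(n+x-r+1)/r!) equals C(n,r)·(H_n − H_{n−r}), where H_m = ∑_{k=1}^m 1/k is the m-th harmonic number. -/

import Mathlib

noncomputable def H (m : ℕ) : ℝ := ∑ j ∈ Finset.range m, (1 : ℝ) / (j + 1)

noncomputable def genBinom (y : ℝ) (r : ℕ) : ℝ :=
  (∏ i ∈ Finset.range r, (y - i)) / (Nat.factorial r)

lemma sum_inv_eq (n : ℕ) : ∀ r : ℕ, r ≤ n →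
    ∑ i ∈ Finset.range r, (1 : ℝ) / ((n : ℝ) - i) = H n - H (n - r)
  | 0, _ => by simp
  | (r+1), hr => by
    have hr' : r ≤ n := by omega
    rw [Finset.sum_range_succ, sum_inv_eq n r hr']
    have h1 : n - r = (n - (r+1)) + 1 := by omega
    have h2 : H (n - r) = H (n - (r+1)) + 1 / ((n : ℝ) - r) := by
      rw [h1, H, Finset.sum_range_succ, ← H]
      congr 1
      have : ((n - (r+1) : ℕ) : ℝ) = (n : ℝ) - r - 1 := by
        push_cast [Nat.cast_sub hr]; ring_nf
      rw [this]; ring_nf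
    rw [h2]; ring

theorem deriv_genBinom_add (n r : ℕ) (h : r ≤ n) :
    deriv (fun x : ℝ => genBinom ((n : ℝ) + x) r) 0 =
      (n.choose r : ℝ) * (H n - H (n - r)) := by
  have hprod : HasDerivAt (fun x : ℝ => ∏ i ∈ Finset.range r, ((n : ℝ) + x - i))
      (∑ i ∈ Finset.range r,
        (∏ j ∈ (Finset.range r).erase i, ((n : ℝ) + 0 - j)) • (1 : ℝ)) 0 := by
    exact HasDerivAt.fun_finsetProd fun i _ =>
      (((hasDerivAt_id (0:ℝ)).const_add (n : ℝ)).sub_const (i : ℝ))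
  have hD : HasDerivAt (fun x : ℝ => genBinom ((n : ℝ) + x) r)
      ((∑ i ∈ Finset.range r,
        ∏ j ∈ (Finset.range r).erase i, ((n : ℝ) - j)) / (Nat.factorial r)) 0 := by
    unfold genBinom
    simpa using hprod.div_const (Nat.factorial r : ℝ)
  rw [hD.deriv]
  -- the full product
  have hP : (∏ j ∈ Finset.range r, ((n : ℝ) - j)) = (n.choose r : ℝ) * (Nat.factorial r : ℝ) := by
    rw [Finset.prod_range_natCast_sub, ← Nat.descFactorial_eq_prod_range,
      Nat.descFactorial_eq_factorial_mul_choose]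
    push_cast; ring
  have hne : ∀ i ∈ Finset.range r, ((n : ℝ) - i) ≠ 0 := by
    intro i hi
    have : (i : ℝ) < n := by
      exact_mod_cast lt_of_lt_of_le (Finset.mem_range.1 hi) h
    linarith
  have herase : ∀ i ∈ Finset.range r,
      (∏ j ∈ (Finset.range r).erase i, ((n : ℝ) - j))
        = (∏ j ∈ Finset.range r, ((n : ℝ) - j)) * (1 / ((n : ℝ) - i)) := by
    intro i hi
    rw [← Finset.mul_prod_erase _ _ hi]
    field_simp [hne i hi]
  rw [Finset.sum_congr rfl herase, ← Finset.mul_sum, hP, sum_inv_eq n r h]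
  have hfac : (Nat.factorial r : ℝ) ≠ 0 := by positivity
  field_simp
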